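/- Let G be a finite group in which every element g satisfies g^3 = 1, and suppose the commutator subgroup ⁅G,G⁆ is NOT contained in the center of G. Then the index of ⁅G,G⁆ in G is at least 27 (i.e., Nat.card (G ⧸ ⁅G,G⁆) ≥ 3^3) and the order of ⁅G,G⁆ is at least 81 (i.e., Nat.card ⁅G,G⁆ ≥ 3^4). -/

import Mathlib

open scoped Pointwise
open scoped commutatorElement

namespace ExpThree

variable {G : Type*} [Group G]

section
variable (hexp : ∀ g : G, g ^ 3 = 1)
include hexp

lemma cube (g : G) : g * g * g = 1 := by
  have h := hexp g
  rw [pow_succ, pow_succ, pow_one] at h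
  exact h

lemma sq_eq_inv (g : G) : g * g = g⁻¹ := by
  rw [eq_inv_iff_mul_eq_one]
  exact cube hexp g

lemma R (a b : G) : a * b * a = b⁻¹ * a⁻¹ * b⁻¹ := by
  have h2 : a * b * a * (b * a * b) = 1 := by
    rw [← cube hexp (a * b)]; group
  have h3 : a * b * a = (b * a * b)⁻¹ := by
    rw [eq_inv_iff_mul_eq_one]; exact h2
  rw [h3]; group

lemma conj_comm (a x : G) : Commute a (x * a * x⁻¹) := by
  have hxinv : x⁻¹ * x⁻¹ = x := by
    rw [← mul_inv_rev, sq_eq_inv hexp, inv_inv]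
  have hr := R hexp a x⁻¹
  rw [inv_inv] at hr
  unfold Commute SemiconjBy
  calc a * (x * a * x⁻¹) = (a * x * a) * x⁻¹ := by group
    _ = (x⁻¹ * a⁻¹ * x⁻¹) * x⁻¹ := by rw [R hexp a x]
    _ = x⁻¹ * a⁻¹ * (x⁻¹ * x⁻¹) := by group
    _ = x⁻¹ * a⁻¹ * x := by rw [hxinv]
    _ = (x * x) * a⁻¹ * x := by rw [← sq_eq_inv hexp]
    _ = x * (x * a⁻¹ * x) := by group
    _ = x * (a * x⁻¹ * a) := by rw [hr]
    _ = (x * a * x⁻¹) * a := by group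

end
end ExpThree

namespace ExpThree

variable {G : Type*} [Group G]

section
variable (hexp : ∀ g : G, g ^ 3 = 1)
include hexp

lemma conj_conj_comm (a g h : G) : Commute (g * a * g⁻¹) (h * a * h⁻¹) := by
  have h1 := (conj_comm hexp a (g⁻¹ * h)).map (MulAut.conj g).toMonoidHom
  simp only [MulAut.conj_apply, MulEquiv.coe_toMonoidHom] at h1
  have e1 : g * a * g⁻¹ = g * a * g⁻¹ := rfl
  have e2 : g * (g⁻¹ * h * a * (g⁻¹ * h)⁻¹) * g⁻¹ = h * a * h⁻¹ := by group
  rwa [e2] at h1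

/-- everything in the normal closure of `{a}` commutes. -/
lemma ncl_comm (a : G) {u v : G} (hu : u ∈ Subgroup.normalClosure {a})
    (hv : v ∈ Subgroup.normalClosure {a}) : Commute u v := by
  unfold Subgroup.normalClosure at hu hv
  induction hu, hv using Subgroup.closure_induction₂ with
  | mem x y hx hy =>
    rw [Group.mem_conjugatesOfSet_iff] at hx hy
    obtain ⟨s, hs, hcs⟩ := hx
    obtain ⟨t, ht, hct⟩ := hy
    rw [Set.mem_singleton_iff] at hs ht
    subst hs; subst ht
    rw [isConj_iff] at hcs hct
    obtain ⟨g, rfl⟩ := hcs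
    obtain ⟨h, rfl⟩ := hct
    exact conj_conj_comm hexp t g h
  | one_left x hx => exact Commute.one_left x
  | one_right x hx => exact Commute.one_right x
  | mul_left x y z hx hy hz h1 h2 => exact h1.mul_left h2
  | mul_right y z x hy hz hx h1 h2 => exact h1.mul_right h2
  | inv_left x y hx hy h1 => exact h1.inv_left
  | inv_right x y hx hy h1 => exact h1.inv_right

end
end ExpThree

namespace ExpThree

variable {G : Type*} [Group G]

lemma mem_ncl_self (a : G) : a ∈ Subgroup.normalClosure ({a} : Set G) :=
  Subgroup.subset_normalClosure rfl

lemma conj_mem_ncl {a u : G} (hu : u ∈ Subgroup.normalClosure ({a} : Set G)) (g : G) :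
    g * u * g⁻¹ ∈ Subgroup.normalClosure ({a} : Set G) :=
  Subgroup.normalClosure_normal.conj_mem u hu g

lemma commutator_mem_ncl_left {a u : G} (hu : u ∈ Subgroup.normalClosure ({a} : Set G)) (z : G) :
    ⁅u, z⁆ ∈ Subgroup.normalClosure ({a} : Set G) := by
  have h : ⁅u, z⁆ = u * (z * u⁻¹ * z⁻¹) := by rw [commutatorElement_def]; group
  rw [h]
  exact mul_mem hu (conj_mem_ncl (inv_mem hu) z)

lemma commutator_mem_ncl_right (u z : G) :
    ⁅u, z⁆ ∈ Subgroup.normalClosure ({z} : Set G) := by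
  have h : ⁅u, z⁆ = (u * z * u⁻¹) * z⁻¹ := by rw [commutatorElement_def]
  rw [h]
  exact mul_mem (conj_mem_ncl (mem_ncl_self z) u) (inv_mem (mem_ncl_self z))

section
variable (hexp : ∀ g : G, g ^ 3 = 1)
include hexp

lemma engel (x y : G) : ⁅⁅x, y⁆, y⁆ = 1 :=
  commutatorElement_eq_one_iff_commute.mpr
    (ncl_comm hexp y (commutator_mem_ncl_right x y) (mem_ncl_self y))

lemma swap23 (x y z : G) : ⁅⁅x, y⁆, z⁆ = ⁅⁅x, z⁆, y⁆⁻¹ := by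
  have idA : ⁅⁅x, y * z⁆, y * z⁆ =
      ⁅x, y⁆ * (y * (⁅⁅x, z⁆, z⁆ * (z * ⁅⁅x, z⁆, y⁆ * z⁻¹)) * y⁻¹) * ⁅x, y⁆⁻¹ *
        (⁅⁅x, y⁆, y⁆ * (y * ⁅⁅x, y⁆, z⁆ * y⁻¹)) := by
    simp only [commutatorElement_def]; group
  rw [engel hexp x (y * z), engel hexp x z, engel hexp x y, one_mul, one_mul] at idA
  set u := ⁅x, y⁆ with hu
  set l1 := ⁅⁅x, y⁆, z⁆ with hl1
  set l2 := ⁅⁅x, z⁆, y⁆ with hl2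
  have hc1 : z * l2 * z⁻¹ = l2 := by
    have hcomm : Commute z l2 :=
      ncl_comm hexp z (mem_ncl_self z)
        (commutator_mem_ncl_left (commutator_mem_ncl_right x z) y)
    rw [hcomm.eq]; group
  rw [hc1] at idA
  -- idA : 1 = u * (y * l2 * y⁻¹) * u⁻¹ * (y * l1 * y⁻¹)
  have eq3 : (y⁻¹ * u * y) * l2 * (y⁻¹ * u⁻¹ * y) * l1 = 1 := by
    have h5 : (y⁻¹ * u * y) * l2 * (y⁻¹ * u⁻¹ * y) * l1 =
        y⁻¹ * (u * (y * l2 * y⁻¹) * u⁻¹ * (y * l1 * y⁻¹)) * y := by group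
    rw [h5, ← idA]; group
  have hc2 : Commute (y⁻¹ * u * y) l2 := by
    have hu_mem : u ∈ Subgroup.normalClosure ({x} : Set G) :=
      commutator_mem_ncl_left (mem_ncl_self x) y
    have h6 : y⁻¹ * u * y ∈ Subgroup.normalClosure ({x} : Set G) := by
      have := conj_mem_ncl hu_mem y⁻¹
      rwa [inv_inv] at this
    exact ncl_comm hexp x h6 (commutator_mem_ncl_left (commutator_mem_ncl_left (mem_ncl_self x) z) y)
  have e4 : (y⁻¹ * u * y) * l2 * (y⁻¹ * u⁻¹ * y) * l1 = l2 * l1 := by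
    rw [hc2.eq]; group
  rw [e4] at eq3
  exact (mul_eq_one_iff_inv_eq.mp eq3).symm

lemma swap12 (x y z : G) : ⁅⁅y, x⁆, z⁆ = ⁅⁅x, y⁆, z⁆⁻¹ := by
  set u := ⁅x, y⁆ with hu
  have hcomm : Commute u ⁅u, z⁆ :=
    ncl_comm hexp x (commutator_mem_ncl_left (mem_ncl_self x) y)
      (commutator_mem_ncl_left (commutator_mem_ncl_left (mem_ncl_self x) y) z)
  have h1 : ⁅⁅y, x⁆, z⁆ = u⁻¹ * (⁅u, z⁆⁻¹ * u) := by
    rw [hu]; simp only [commutatorElement_def]; group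
  rw [h1, hcomm.inv_right.symm.eq]; group

lemma cyc (x y z : G) : ⁅⁅y, z⁆, x⁆ = ⁅⁅x, y⁆, z⁆ := by
  rw [swap23 hexp y z x, swap12 hexp x y z, inv_inv]

end
end ExpThree

namespace ExpThree

variable {G : Type*} [Group G]

lemma commutator_mul_center_left {z : G} (hz : z ∈ Subgroup.center G) (a b : G) :
    ⁅a * z, b⁆ = ⁅a, b⁆ := by
  have hc := Subgroup.mem_center_iff.mp hz
  simp only [commutatorElement_def]
  calc a * z * b * (a * z)⁻¹ * b⁻¹ = a * (z * b) * (z⁻¹ * a⁻¹) * b⁻¹ := by group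
    _ = a * (b * z) * (z⁻¹ * a⁻¹) * b⁻¹ := by rw [← hc b]
    _ = a * b * a⁻¹ * b⁻¹ := by group

lemma commutator_mul_center_right {z : G} (hz : z ∈ Subgroup.center G) (a b : G) :
    ⁅a, b * z⁆ = ⁅a, b⁆ := by
  rw [← commutatorElement_inv, commutator_mul_center_left hz,  commutatorElement_inv]

universe u

lemma frattini_lemma :
    ∀ (n : ℕ) {G : Type u} [Group G] [Finite G] (_ : ∀ g : G, g ^ 3 = 1)
      (H : Subgroup G), Nat.card G ≤ n → H ⊔ commutator G = ⊤ → H = ⊤ := by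
  intro n
  induction n with
  | zero =>
    intro G _ _ _ H hcard _
    have : 0 < Nat.card G := Nat.card_pos
    omega
  | succ n ih =>
    intro G _ _ hexp H hcard hsup
    rcases subsingleton_or_nontrivial G with hs | hnt
    · rw [eq_top_iff]
      intro x _
      rw [Subsingleton.elim x 1]
      exact one_mem H
    · have hfact : Fact (Nat.Prime 3) := ⟨by norm_num⟩
      have hp : IsPGroup 3 G := fun g => ⟨1, by simpa using hexp g⟩
      have hZnt : Nontrivial (Subgroup.center G) := hp.center_nontrivial
      set Z := Subgroup.center G with hZ
      let π := QuotientGroup.mk' Z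
      have hπsurj : Function.Surjective π := QuotientGroup.mk'_surjective Z
      have hcardlt : Nat.card (G ⧸ Z) < Nat.card G := by
        have hmul := Subgroup.card_eq_card_quotient_mul_card_subgroup Z
        have h2 : 1 < Nat.card Z := Finite.one_lt_card
        have hQpos : 0 < Nat.card (G ⧸ Z) := Nat.card_pos
        nlinarith
      have hexpQ : ∀ q : G ⧸ Z, q ^ 3 = 1 := by
        intro q
        obtain ⟨g, rfl⟩ := hπsurj q
        rw [← map_pow, hexp g, map_one]
      have hmapcomm : Subgroup.map π (commutator G) = commutator (G ⧸ Z) := by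
        rw [commutator_def, Subgroup.map_commutator,
          Subgroup.map_top_of_surjective π hπsurj, ← commutator_def]
      have hmap : (H.map π) ⊔ commutator (G ⧸ Z) = ⊤ := by
        have h1 : Subgroup.map π (H ⊔ commutator G) = Subgroup.map π ⊤ := by rw [hsup]
        rw [Subgroup.map_sup, hmapcomm, Subgroup.map_top_of_surjective π hπsurj] at h1
        exact h1
      have hHtop : H.map π = ⊤ := ih hexpQ (H.map π) (by omega) hmap
      have hHZ : H ⊔ Z = ⊤ := by
        have h3 := Subgroup.comap_map_eq (f := π) H
        rw [hHtop, Subgroup.comap_top, QuotientGroup.ker_mk'] at h3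
        exact h3.symm
      have hcomm_le : commutator G ≤ H := by
        rw [commutator_def, Subgroup.commutator_le]
        intro g1 _ g2 _
        have hg1 : g1 ∈ ((H : Set G) * (Z : Set G)) := by
          rw [← Subgroup.mul_normal H Z, hHZ]; simp
        have hg2 : g2 ∈ ((H : Set G) * (Z : Set G)) := by
          rw [← Subgroup.mul_normal H Z, hHZ]; simp
        obtain ⟨h1, hh1, z1, hz1, rfl⟩ := hg1
        obtain ⟨h2, hh2, z2, hz2, rfl⟩ := hg2
        rw [commutator_mul_center_left hz1, commutator_mul_center_right hz2]
        have : ⁅h1, h2⁆ = h1 * h2 * h1⁻¹ * h2⁻¹ := commutatorElement_def h1 h2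
        rw [this]
        exact mul_mem (mul_mem (mul_mem hh1 hh2) (inv_mem hh1)) (inv_mem hh2)
      rw [← hsup, sup_eq_left.mpr hcomm_le]
end ExpThree

namespace ExpThree

variable {G : Type*} [Group G] [Finite G]

/-- any finite group of exponent 3 and order < 27 is generated by two elements -/
lemma two_generated (hexp : ∀ g : G, g ^ 3 = 1) (hlt : Nat.card G < 27) :
    ∃ u v : G, Subgroup.closure ({u, v} : Set G) = ⊤ := by
  have hp : IsPGroup 3 G := fun g => ⟨1, by simpa using hexp g⟩
  have hfact : Fact (Nat.Prime 3) := ⟨by norm_num⟩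
  obtain ⟨k, hk⟩ := IsPGroup.iff_card.mp hp
  have hk2 : k ≤ 2 := by
    by_contra hk3
    push_neg at hk3
    have : 27 ≤ 3 ^ k := by
      calc (27 : ℕ) = 3 ^ 3 := by norm_num
        _ ≤ 3 ^ k := Nat.pow_le_pow_right (by norm_num) hk3
    omega
  rcases subsingleton_or_nontrivial G with hs | hnt
  · refine ⟨1, 1, ?_⟩
    rw [eq_top_iff]; intro g _
    rw [Subsingleton.elim g 1]; exact one_mem _
  · obtain ⟨u, hu⟩ := exists_ne (1 : G)
    by_cases hS : Subgroup.closure ({u} : Set G) = ⊤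
    · refine ⟨u, u, ?_⟩
      rw [Set.pair_eq_singleton, hS]
    · have : ∃ v, v ∉ Subgroup.closure ({u} : Set G) := by
        by_contra hv; push_neg at hv
        exact hS (by rw [eq_top_iff]; intro g _; exact hv g)
      obtain ⟨v, hv⟩ := this
      refine ⟨u, v, ?_⟩
      set S := Subgroup.closure ({u} : Set G)
      set K := Subgroup.closure ({u, v} : Set G) with hK
      have hSK : S ≤ K := Subgroup.closure_mono (by simp)
      have hne : S ≠ K := fun h => hv (h ▸ Subgroup.subset_closure (by simp : v ∈ ({u, v} : Set G)))
      have hdS : Nat.card S ∣ 3 ^ k := hk ▸ Subgroup.card_subgroup_dvd_card S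
      have hdK : Nat.card K ∣ 3 ^ k := hk ▸ Subgroup.card_subgroup_dvd_card K
      have hSne1 : Nat.card S ≠ 1 := by
        intro h1
        have hbot := Subgroup.eq_bot_of_card_eq S h1
        have humem : u ∈ S := Subgroup.subset_closure (Set.mem_singleton u)
        rw [hbot, Subgroup.mem_bot] at humem
        exact hu humem
      have hcardlt : Nat.card S < Nat.card K := by
        rcases lt_or_ge (Nat.card S) (Nat.card K) with h | h
        · exact h
        · exact absurd (Subgroup.eq_of_le_of_card_ge hSK h) hne
      -- card S ∣ card K
      have hSdK : Nat.card S ∣ Nat.card K := Subgroup.card_dvd_of_le hSK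
      obtain ⟨i, hik, hSi⟩ := (Nat.dvd_prime_pow Nat.prime_three).mp hdS
      obtain ⟨j, hjk, hKj⟩ := (Nat.dvd_prime_pow Nat.prime_three).mp hdK
      have hij : i < j := by
        rw [hSi, hKj] at hcardlt
        exact (Nat.pow_lt_pow_iff_right (by norm_num)).mp hcardlt
      have hi1 : 1 ≤ i := by
        rcases Nat.eq_zero_or_pos i with h0 | h1
        · exfalso; apply hSne1; rw [hSi, h0, pow_zero]
        · exact h1
      have hj2 : j = 2 ∧ k = 2 := by omega
      apply Subgroup.eq_top_of_card_eq
      rw [hKj, hk, hj2.1, hj2.2]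
  end ExpThree

namespace ExpThree

variable {G : Type*} [Group G] [Finite G]

lemma part1 (hexp : ∀ g : G, g ^ 3 = 1) (hnc : ¬ commutator G ≤ Subgroup.center G) :
    3 ^ 3 ≤ Nat.card (G ⧸ commutator G) := by
  by_contra hlt
  push_neg at hlt
  norm_num at hlt
  apply hnc
  set N := commutator G with hN
  let π := QuotientGroup.mk' N
  have hπsurj : Function.Surjective π := QuotientGroup.mk'_surjective N
  have hexpQ : ∀ q : G ⧸ N, q ^ 3 = 1 := by
    intro q
    obtain ⟨g, rfl⟩ := hπsurj q
    rw [← map_pow, hexp g, map_one]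
  obtain ⟨u, v, huv⟩ := two_generated hexpQ hlt
  obtain ⟨x, hx⟩ := hπsurj u
  obtain ⟨y, hy⟩ := hπsurj v
  set M := Subgroup.closure ({x, y} : Set G) with hM
  have hmap : Subgroup.map π M = ⊤ := by
    rw [hM, MonoidHom.map_closure]
    have himg : (π '' {x, y} : Set (G ⧸ N)) = {u, v} := by
      rw [Set.image_insert_eq, Set.image_singleton, hx, hy]
    rw [himg, huv]
  have hsup : M ⊔ N = ⊤ := by
    have h3 := Subgroup.comap_map_eq (f := π) M
    rw [hmap, Subgroup.comap_top, QuotientGroup.ker_mk'] at h3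
    exact h3.symm
  have hMtop : M = ⊤ := frattini_lemma (Nat.card G) hexp M le_rfl hsup
  set z := ⁅x, y⁆ with hz
  have hzc : ∀ g : G, Commute g z := by
    intro g
    have hgM : g ∈ Subgroup.closure ({x, y} : Set G) := by
      rw [← hM, hMtop]; exact Subgroup.mem_top g
    induction hgM using Subgroup.closure_induction with
    | mem s hs =>
      rcases hs with rfl | rfl
      · exact ncl_comm hexp s (mem_ncl_self s) (commutator_mem_ncl_left (mem_ncl_self s) y)
      · exact ncl_comm hexp s (mem_ncl_self s) (commutator_mem_ncl_right x s)
    | one => exact Commute.one_left z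
    | mul s t _ _ h1 h2 => exact h1.mul_left h2
    | inv s _ h1 => exact h1.inv_left
  have hzcen : z ∈ Subgroup.center G := Subgroup.mem_center_iff.mpr fun g => (hzc g)
  let ρ := QuotientGroup.mk' (Subgroup.center G)
  have hρsurj : Function.Surjective ρ := QuotientGroup.mk'_surjective _
  have hgenρ : Subgroup.closure ({ρ x, ρ y} : Set (G ⧸ Subgroup.center G)) = ⊤ := by
    have h4 : Subgroup.map ρ M = ⊤ := by
      rw [hMtop, Subgroup.map_top_of_surjective ρ hρsurj]
    rw [hM, MonoidHom.map_closure, Set.image_insert_eq, Set.image_singleton] at h4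
    exact h4
  have hcommxy : Commute (ρ x) (ρ y) := by
    rw [← commutatorElement_eq_one_iff_commute, ← map_commutatorElement]
    exact (QuotientGroup.eq_one_iff z).mpr hzcen
  have hallcomm : ∀ q r : G ⧸ Subgroup.center G, Commute q r := by
    intro q r
    have hq : q ∈ Subgroup.closure ({ρ x, ρ y} : Set (G ⧸ Subgroup.center G)) := by
      rw [hgenρ]; exact Subgroup.mem_top q
    have hr : r ∈ Subgroup.closure ({ρ x, ρ y} : Set (G ⧸ Subgroup.center G)) := by
      rw [hgenρ]; exact Subgroup.mem_top r
    induction hq, hr using Subgroup.closure_induction₂ with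
    | mem s t hs ht =>
      rcases hs with rfl | rfl <;> rcases ht with rfl | rfl
      · exact Commute.refl _
      · exact hcommxy
      · exact hcommxy.symm
      · exact Commute.refl _
    | one_left t ht => exact Commute.one_left t
    | one_right s hs => exact Commute.one_right s
    | mul_left s t r hs ht hr h1 h2 => exact h1.mul_left h2
    | mul_right t r s ht hr hs h1 h2 => exact h1.mul_right h2
    | inv_left s t hs ht h1 => exact h1.inv_left
    | inv_right s t hs ht h1 => exact h1.inv_right
  rw [hN, commutator_def, Subgroup.commutator_le]
  intro g1 _ g2 _
  rw [← QuotientGroup.eq_one_iff (⁅g1, g2⁆ : G)]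
  show (QuotientGroup.mk' (Subgroup.center G)) ⁅g1, g2⁆ = 1
  rw [map_commutatorElement]
  exact (hallcomm (ρ g1) (ρ g2)).commutator_eq
end ExpThree

namespace ExpThree

variable {G : Type*} [Group G]

lemma conj_of_commute {s t : G} (h : Commute s t) : t⁻¹ * s * t = s := by
  calc t⁻¹ * s * t = t⁻¹ * (s * t) := by group
    _ = t⁻¹ * (t * s) := by rw [h.eq]
    _ = s := by group

lemma conj_pow_inv (g s : G) (m : ℕ) : (g⁻¹ * s * g) ^ m = g⁻¹ * s ^ m * g := by
  have h := conj_pow (i := m) (a := g⁻¹) (b := s)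
  rwa [inv_inv] at h

lemma conj_eq {p q r : G} (h : ⁅p, q⁆ = r) (hc : Commute r q) : q⁻¹ * p * q = r * p := by
  have h1 : q⁻¹ * r * q = (q⁻¹ * p * q) * p⁻¹ := by
    rw [← h]; simp only [commutatorElement_def]; group
  have h2 : q⁻¹ * r * q = r := conj_of_commute hc
  have h3 : r = q⁻¹ * p * q * p⁻¹ := h2.symm.trans h1
  rw [h3]; group

lemma collect4 {x y z w : G} (hxy : Commute x y) (hxz : Commute x z) (hxw : Commute x w)
    (hyz : Commute y z) (hyw : Commute y w) (hzw : Commute z w)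
    (i j k l a b c d : ℕ) :
    (x^i * y^j * z^k * w^l) * (x^a * y^b * z^c * w^d)
      = x^(i+a) * y^(j+b) * z^(k+c) * w^(l+d) := by
  have hYX : Commute (y^j * (z^k * w^l)) (x^a) :=
    ((hxy.symm).pow_pow j a).mul_left (((hxz.symm).pow_pow k a).mul_left
      ((hxw.symm).pow_pow l a))
  have hZY : Commute (z^k * w^l) (y^b) :=
    ((hyz.symm).pow_pow k b).mul_left ((hyw.symm).pow_pow l b)
  have hWZ : Commute (w^l) (z^c) := (hzw.symm).pow_pow l c
  calc (x^i * y^j * z^k * w^l) * (x^a * y^b * z^c * w^d)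
      = x^i * ((y^j * (z^k * w^l)) * x^a) * (y^b * z^c * w^d) := by group
    _ = x^i * (x^a * (y^j * (z^k * w^l))) * (y^b * z^c * w^d) := by rw [hYX.eq]
    _ = (x^i * x^a) * y^j * ((z^k * w^l) * y^b) * (z^c * w^d) := by group
    _ = (x^i * x^a) * y^j * (y^b * (z^k * w^l)) * (z^c * w^d) := by rw [hZY.eq]
    _ = (x^i * x^a) * (y^j * y^b) * z^k * (w^l * z^c) * w^d := by group
    _ = (x^i * x^a) * (y^j * y^b) * z^k * (z^c * w^l) * w^d := by rw [hWZ.eq]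
    _ = x^(i+a) * y^(j+b) * z^(k+c) * w^(l+d) := by
        rw [pow_add, pow_add, pow_add, pow_add]; group

end ExpThree

namespace ExpThree

variable {G : Type*} [Group G] [Finite G]

lemma part2 (hexp : ∀ g : G, g ^ 3 = 1) (hnc : ¬ commutator G ≤ Subgroup.center G) :
    3 ^ 4 ≤ Nat.card ↥(commutator G) := by
  have hfact : Fact (Nat.Prime 3) := ⟨by norm_num⟩
  have habc : ∃ a b c : G, ⁅⁅a, b⁆, c⁆ ≠ 1 := by
    by_contra h
    push_neg at h
    apply hnc
    rw [commutator_def, Subgroup.commutator_le]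
    intro g1 _ g2 _
    rw [Subgroup.mem_center_iff]
    intro g
    exact ((commutatorElement_eq_one_iff_commute.mp (h g1 g2 g)).symm).eq
  obtain ⟨a, b, c, hw1⟩ := habc
  set x := ⁅a, b⁆ with hxdef
  set y := ⁅a, c⁆ with hydef
  set z := ⁅b, c⁆ with hzdef
  set w := ⁅x, c⁆ with hwdef
  -- memberships in normal closures
  have hxNa : x ∈ Subgroup.normalClosure ({a} : Set G) :=
    commutator_mem_ncl_left (mem_ncl_self a) b
  have hyNa : y ∈ Subgroup.normalClosure ({a} : Set G) :=
    commutator_mem_ncl_left (mem_ncl_self a) c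
  have hwNa : w ∈ Subgroup.normalClosure ({a} : Set G) :=
    commutator_mem_ncl_left hxNa c
  have hxNb : x ∈ Subgroup.normalClosure ({b} : Set G) := commutator_mem_ncl_right a b
  have hzNb : z ∈ Subgroup.normalClosure ({b} : Set G) :=
    commutator_mem_ncl_left (mem_ncl_self b) c
  have hwNb : w ∈ Subgroup.normalClosure ({b} : Set G) := commutator_mem_ncl_left hxNb c
  have hyNc : y ∈ Subgroup.normalClosure ({c} : Set G) := commutator_mem_ncl_right a c
  have hzNc : z ∈ Subgroup.normalClosure ({c} : Set G) := commutator_mem_ncl_right b c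
  have hwNc : w ∈ Subgroup.normalClosure ({c} : Set G) := commutator_mem_ncl_right x c
  -- commuting facts
  have hwx : Commute w x := ncl_comm hexp a hwNa hxNa
  have hwy : Commute w y := ncl_comm hexp a hwNa hyNa
  have hwz : Commute w z := ncl_comm hexp b hwNb hzNb
  have hwa : Commute w a := ncl_comm hexp a hwNa (mem_ncl_self a)
  have hwb : Commute w b := ncl_comm hexp b hwNb (mem_ncl_self b)
  have hwc : Commute w c := ncl_comm hexp c hwNc (mem_ncl_self c)
  have hxy : Commute x y := ncl_comm hexp a hxNa hyNa
  have hxz : Commute x z := ncl_comm hexp b hxNb hzNb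
  have hyz : Commute y z := ncl_comm hexp c hyNc hzNc
  have hxa : Commute x a := ncl_comm hexp a hxNa (mem_ncl_self a)
  have hya : Commute y a := ncl_comm hexp a hyNa (mem_ncl_self a)
  have hxb : Commute x b := ncl_comm hexp b hxNb (mem_ncl_self b)
  have hzb : Commute z b := ncl_comm hexp b hzNb (mem_ncl_self b)
  have hyc : Commute y c := ncl_comm hexp c hyNc (mem_ncl_self c)
  have hzc : Commute z c := ncl_comm hexp c hzNc (mem_ncl_self c)
  -- commutator values
  have hzaw : ⁅z, a⁆ = w := by rw [hzdef, hwdef, hxdef]; exact cyc hexp a b c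
  have hybw : ⁅y, b⁆ = w⁻¹ := by
    have h := swap23 hexp a b c
    rw [← hxdef, ← hwdef, ← hydef] at h
    exact inv_eq_iff_eq_inv.mp h.symm
  -- conjugation formulas
  have ecx : c⁻¹ * x * c = w * x := conj_eq rfl hwc
  have eby : b⁻¹ * y * b = w⁻¹ * y := conj_eq hybw hwb.inv_left
  have eaz : a⁻¹ * z * a = w * z := conj_eq hzaw hwa
  have ecy : c⁻¹ * y * c = y := conj_of_commute hyc
  have ecz : c⁻¹ * z * c = z := conj_of_commute hzc
  have ecw : c⁻¹ * w * c = w := conj_of_commute hwc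
  have ebz : b⁻¹ * z * b = z := conj_of_commute hzb
  have ebw : b⁻¹ * w * b = w := conj_of_commute hwb
  have eaw : a⁻¹ * w * a = w := conj_of_commute hwa
  have hw3 : orderOf w = 3 := orderOf_eq_prime (hexp w) hw1
  -- independence
  have key : ∀ m n p q : ℕ, x^m * y^n * z^p * w^q = 1 → 3 ∣ m ∧ 3 ∣ n ∧ 3 ∣ p ∧ 3 ∣ q := by
    intro m n p q E
    have E1 : (c⁻¹*x*c)^m * (c⁻¹*y*c)^n * (c⁻¹*z*c)^p * (c⁻¹*w*c)^q = 1 := by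
      rw [conj_pow_inv, conj_pow_inv, conj_pow_inv, conj_pow_inv]
      calc c⁻¹*x^m*c * (c⁻¹*y^n*c) * (c⁻¹*z^p*c) * (c⁻¹*w^q*c)
          = c⁻¹ * (x^m * y^n * z^p * w^q) * c := by group
        _ = 1 := by rw [E]; group
    rw [ecx, ecy, ecz, ecw, hwx.mul_pow] at E1
    have hwm : w^m = 1 := by
      have h2 : w^m * (x^m * y^n * z^p * w^q) = 1 := by rw [← E1]; group
      rwa [E, mul_one] at h2
    have hm3 : 3 ∣ m := hw3 ▸ orderOf_dvd_of_pow_eq_one hwm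
    have hxm : x^m = 1 := by
      obtain ⟨m', rfl⟩ := hm3; rw [pow_mul, hexp, one_pow]
    rw [hxm, one_mul] at E
    -- E : y^n * z^p * w^q = 1
    have E2 : (b⁻¹*y*b)^n * (b⁻¹*z*b)^p * (b⁻¹*w*b)^q = 1 := by
      rw [conj_pow_inv, conj_pow_inv, conj_pow_inv]
      calc b⁻¹*y^n*b * (b⁻¹*z^p*b) * (b⁻¹*w^q*b)
          = b⁻¹ * (y^n * z^p * w^q) * b := by group
        _ = 1 := by rw [E]; group
    rw [eby, ebz, ebw, (hwy.inv_left).mul_pow] at E2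
    have hwn : w^n = 1 := by
      have h2 : (w⁻¹)^n * (y^n * z^p * w^q) = 1 := by rw [← E2]; group
      rw [E, mul_one, inv_pow] at h2
      exact inv_eq_one.mp h2
    have hn3 : 3 ∣ n := hw3 ▸ orderOf_dvd_of_pow_eq_one hwn
    have hyn : y^n = 1 := by
      obtain ⟨n', rfl⟩ := hn3; rw [pow_mul, hexp, one_pow]
    rw [hyn, one_mul] at E
    -- E : z^p * w^q = 1
    have E3 : (a⁻¹*z*a)^p * (a⁻¹*w*a)^q = 1 := by
      rw [conj_pow_inv, conj_pow_inv]
      calc a⁻¹*z^p*a * (a⁻¹*w^q*a)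
          = a⁻¹ * (z^p * w^q) * a := by group
        _ = 1 := by rw [E]; group
    rw [eaz, eaw, hwz.mul_pow] at E3
    have hwp : w^p = 1 := by
      have h2 : w^p * (z^p * w^q) = 1 := by rw [← E3]; group
      rwa [E, mul_one] at h2
    have hp3 : 3 ∣ p := hw3 ▸ orderOf_dvd_of_pow_eq_one hwp
    have hzp : z^p = 1 := by
      obtain ⟨p', rfl⟩ := hp3; rw [pow_mul, hexp, one_pow]
    rw [hzp, one_mul] at E
    exact ⟨hm3, hn3, hp3, hw3 ▸ orderOf_dvd_of_pow_eq_one E⟩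
  -- membership in the commutator subgroup
  have hxmem : x ∈ commutator G :=
    Subgroup.commutator_mem_commutator (Subgroup.mem_top a) (Subgroup.mem_top b)
  have hymem : y ∈ commutator G :=
    Subgroup.commutator_mem_commutator (Subgroup.mem_top a) (Subgroup.mem_top c)
  have hzmem : z ∈ commutator G :=
    Subgroup.commutator_mem_commutator (Subgroup.mem_top b) (Subgroup.mem_top c)
  have hwmem : w ∈ commutator G :=
    Subgroup.commutator_mem_commutator (Subgroup.mem_top x) (Subgroup.mem_top c)
  have hmemF : ∀ t : Fin 3 × Fin 3 × Fin 3 × Fin 3,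
      x^(t.1 : ℕ) * y^(t.2.1 : ℕ) * z^(t.2.2.1 : ℕ) * w^(t.2.2.2 : ℕ) ∈ commutator G :=
    fun t => mul_mem (mul_mem (mul_mem (pow_mem hxmem _) (pow_mem hymem _))
      (pow_mem hzmem _)) (pow_mem hwmem _)
  have hinj : Function.Injective
      (fun t : Fin 3 × Fin 3 × Fin 3 × Fin 3 =>
        (⟨x^(t.1 : ℕ) * y^(t.2.1 : ℕ) * z^(t.2.2.1 : ℕ) * w^(t.2.2.2 : ℕ), hmemF t⟩ :
          ↥(commutator G))) := by
    rintro ⟨i, j, k, l⟩ ⟨i', j', k', l'⟩ hEq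
    rw [Subtype.mk_eq_mk] at hEq
    simp only at hEq
    have h1 : x^((i:ℕ)+(3-(i':ℕ))) * y^((j:ℕ)+(3-(j':ℕ))) * z^((k:ℕ)+(3-(k':ℕ)))
        * w^((l:ℕ)+(3-(l':ℕ))) = 1 := by
      rw [← collect4 hxy hxz hwx.symm hyz hwy.symm hwz.symm, hEq,
        collect4 hxy hxz hwx.symm hyz hwy.symm hwz.symm]
      have e1 : (i':ℕ) + (3 - (i':ℕ)) = 3 := by have := i'.isLt; omega
      have e2 : (j':ℕ) + (3 - (j':ℕ)) = 3 := by have := j'.isLt; omega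
      have e3 : (k':ℕ) + (3 - (k':ℕ)) = 3 := by have := k'.isLt; omega
      have e4 : (l':ℕ) + (3 - (l':ℕ)) = 3 := by have := l'.isLt; omega
      rw [e1, e2, e3, e4, hexp x, hexp y, hexp z, hexp w]
      simp
    obtain ⟨d1, d2, d3, d4⟩ := key _ _ _ _ h1
    have hi := i.isLt; have hi' := i'.isLt
    have hj := j.isLt; have hj' := j'.isLt
    have hk := k.isLt; have hk' := k'.isLt
    have hl := l.isLt; have hl' := l'.isLt
    simp only [Prod.mk.injEq]
    refine ⟨?_, ?_, ?_, ?_⟩ <;> apply Fin.ext <;> omega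
  calc (3:ℕ)^4 = Nat.card (Fin 3 × Fin 3 × Fin 3 × Fin 3) := by
        simp [Nat.card_prod]
    _ ≤ Nat.card ↥(commutator G) := Nat.card_le_card_of_injective _ hinj
end ExpThree

/-- Let `G` be a finite group in which every element satisfies `g ^ 3 = 1`, and suppose the
commutator subgroup is not contained in the center. Then the index of `⁅G,G⁆` in `G` is at
least `3 ^ 3` and the order of `⁅G,G⁆` is at least `3 ^ 4`. -/
theorem exponent_three_nonabelian_action_bounds
    (G : Type*) [Group G] [Finite G]
    (hexp : ∀ g : G, g ^ 3 = 1)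
    (hnc : ¬ commutator G ≤ Subgroup.center G) :
    3 ^ 3 ≤ Nat.card (G ⧸ commutator G) ∧ 3 ^ 4 ≤ Nat.card ↥(commutator G) := by
  exact ⟨ExpThree.part1 hexp hnc, ExpThree.part2 hexp hnc⟩
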